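/- Let G and Ḡ be MILP instances of size (m,n). Then G ∼₂^W Ḡ if and only if F(G) = F(Ḡ) for every 2-FGNN F of size (m,n). -/

import Mathlib

open scoped BigOperators Classical
open MeasureTheory

noncomputable section

/-- Type of constraint senses: `0` is `≤`, `1` is `=`, `2` is `≥`. -/
abbrev Sense : Type := Fin 3

/-- Extended lower bounds: `Sum.inl a` is a real bound, `Sum.inr ()` is `-∞`. -/
abbrev ExtLo : Type := ℝ ⊕ Unit

/-- Extended upper bounds: `Sum.inl a` is a real bound, `Sum.inr ()` is `+∞`. -/
abbrev ExtHi : Type := ℝ ⊕ Unit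

def senseRel (s : Sense) (a b : ℝ) : Prop :=
  if s = 0 then a ≤ b else if s = 1 then a = b else b ≤ a

def loSat (lo : ExtLo) (x : ℝ) : Prop :=
  match lo with
  | Sum.inl a => a ≤ x
  | Sum.inr _ => True

def hiSat (hi : ExtHi) (x : ℝ) : Prop :=
  match hi with
  | Sum.inl a => x ≤ a
  | Sum.inr _ => True

/-- The space `𝒢_{m,n}` of MILP instances of size `(m,n)`:
`(A, b, c, ∘, l, u, I)`, with `I` encoded as a Boolean indicator vector. -/
abbrev MILP (m n : ℕ) : Type :=
  (Fin m → Fin n → ℝ) × (Fin m → ℝ) × (Fin n → ℝ) × (Fin m → Sense) ×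
  (Fin n → ExtLo) × (Fin n → ExtHi) × (Fin n → Bool)

namespace MILP

variable {m n : ℕ}

def A (G : MILP m n) : Fin m → Fin n → ℝ := G.1
def b (G : MILP m n) : Fin m → ℝ := G.2.1
def c (G : MILP m n) : Fin n → ℝ := G.2.2.1
def sense (G : MILP m n) : Fin m → Sense := G.2.2.2.1
def lo (G : MILP m n) : Fin n → ExtLo := G.2.2.2.2.1
def hi (G : MILP m n) : Fin n → ExtHi := G.2.2.2.2.2.1
def isInt (G : MILP m n) : Fin n → Bool := G.2.2.2.2.2.2

end MILP

/-- Satisfaction of the linear constraints `(Ax) ∘ b`. -/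
def consSat {m n : ℕ} (G : MILP m n) (x : Fin n → ℝ) : Prop :=
  ∀ i, senseRel (MILP.sense G i) (∑ j, MILP.A G i j * x j) (MILP.b G i)

/-- Feasible set of the LP relaxation of `G`. -/
def lpFeasSet {m n : ℕ} (G : MILP m n) : Set (Fin n → ℝ) :=
  {x | consSat G x ∧ ∀ j, loSat (MILP.lo G j) (x j) ∧ hiSat (MILP.hi G j) (x j)}

/-- Feasible set of `LP(G, j, lo', hi')`: the LP relaxation of `G` with the bound
constraint on variable `j` replaced by `lo' ≤ x_j ≤ hi'`. -/
def feasSetMod {m n : ℕ} (G : MILP m n) (j : Fin n) (lo' : ExtLo) (hi' : ExtHi) :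
    Set (Fin n → ℝ) :=
  {x | consSat G x ∧ (∀ j', j' ≠ j → loSat (MILP.lo G j') (x j') ∧ hiSat (MILP.hi G j') (x j'))
      ∧ loSat lo' (x j) ∧ hiSat hi' (x j)}

/-- Optimal value (in `ℝ ∪ {±∞}`) of the LP `min cᵀx` over `S`:
`+∞` if infeasible, `-∞` if unbounded below. -/
def lpVal {n : ℕ} (c : Fin n → ℝ) (S : Set (Fin n → ℝ)) : EReal :=
  ⨅ x ∈ S, ((∑ j, c j * x j : ℝ) : EReal)

/-- `f*(G)`: optimal value of the LP relaxation of `G`. -/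
def fstar {m n : ℕ} (G : MILP m n) : EReal := lpVal (MILP.c G) (lpFeasSet G)

/-- `f*(G, j, lo', hi')`: optimal value of `LP(G, j, lo', hi')`. -/
def lpValMod {m n : ℕ} (G : MILP m n) (j : Fin n) (lo' : ExtLo) (hi' : ExtHi) : EReal :=
  lpVal (MILP.c G) (feasSetMod G j lo' hi')

/-- The Euclidean norm on `ℝⁿ` (as `Fin n → ℝ`). -/
def euclNorm {n : ℕ} (x : Fin n → ℝ) : ℝ := Real.sqrt (∑ j, x j ^ 2)

/-- The Euclidean distance on `ℝⁿ`. -/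
def euclDist {n : ℕ} (x y : Fin n → ℝ) : ℝ := euclNorm (fun j => x j - y j)

/-- `x` is an optimal solution of the LP relaxation of `G`. -/
def IsOptSol {m n : ℕ} (G : MILP m n) (x : Fin n → ℝ) : Prop :=
  x ∈ lpFeasSet G ∧ ((∑ j, MILP.c G j * x j : ℝ) : EReal) = fstar G

/-- `x` is an optimal solution of smallest Euclidean norm of the LP relaxation of `G`. -/
def IsMinNormOpt {m n : ℕ} (G : MILP m n) (x : Fin n → ℝ) : Prop :=
  IsOptSol G x ∧ ∀ y, IsOptSol G y → euclNorm x ≤ euclNorm y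

/-- `x*(G)`: the optimal solution of smallest Euclidean norm of the LP relaxation
(defaults to `0` when it does not exist). -/
def xstar {m n : ℕ} (G : MILP m n) : Fin n → ℝ :=
  if h : ∃ x, IsMinNormOpt G x then h.choose else 0

/-- `f*(G, j, l_j, ⌊x*(G)_j⌋)`. -/
def branchDown {m n : ℕ} (G : MILP m n) (j : Fin n) : EReal :=
  lpValMod G j (MILP.lo G j) (Sum.inl ((⌊xstar G j⌋ : ℤ) : ℝ))

/-- `f*(G, j, ⌈x*(G)_j⌉, u_j)`. -/
def branchUp {m n : ℕ} (G : MILP m n) (j : Fin n) : EReal :=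
  lpValMod G j (Sum.inl ((⌈xstar G j⌉ : ℤ) : ℝ)) (MILP.hi G j)

/-- The strong branching score vector `SB(G) ∈ ℝⁿ`. -/
def SB {m n : ℕ} (G : MILP m n) : Fin n → ℝ := fun j =>
  if MILP.isInt G j then
    ((branchDown G j).toReal - (fstar G).toReal) * ((branchUp G j).toReal - (fstar G).toReal)
  else 0

/-- `SB(G) ∈ ℝⁿ`: the LP relaxation of `G` is feasible and bounded (so that the
min-norm optimal solution `x*(G)` exists and `f*(G)` is finite), and all the
branch LP values entering the strong branching scores are finite. -/
def SBRealValued {m n : ℕ} (G : MILP m n) : Prop :=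
  (∃ x, IsMinNormOpt G x) ∧ fstar G ≠ ⊤ ∧ fstar G ≠ ⊥ ∧
  ∀ j, MILP.isInt G j →
    branchDown G j ≠ ⊤ ∧ branchDown G j ≠ ⊥ ∧ branchUp G j ≠ ⊤ ∧ branchUp G j ≠ ⊥

/-! ### WL colors -/

abbrev VFeat : Type := ℝ × Sense
abbrev WFeat : Type := ℝ × ExtLo × ExtHi × Bool

/-- The pair (type of constraint-node colors, type of variable-node colors) at
each round of the WL test. -/
def WLTypes : ℕ → Type × Type
  | 0 => (VFeat, WFeat)
  | l + 1 =>
      ((WLTypes l).1 × Multiset ((WLTypes l).2 × ℝ),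
       (WLTypes l).2 × Multiset ((WLTypes l).1 × ℝ))

abbrev VColor (l : ℕ) : Type := (WLTypes l).1
abbrev WColor (l : ℕ) : Type := (WLTypes l).2

/-- The canonical WL colors of a MILP instance: `(wl G l).1 i = C_l^V(i)` and
`(wl G l).2 j = C_l^W(j)`. -/
def wl {m n : ℕ} (G : MILP m n) : (l : ℕ) → (Fin m → VColor l) × (Fin n → WColor l)
  | 0 =>
      (fun i => (MILP.b G i, MILP.sense G i),
       fun j => (MILP.c G j, MILP.lo G j, MILP.hi G j, MILP.isInt G j))
  | l + 1 =>
      (fun i => ((wl G l).1 i,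
        (Finset.univ.filter (fun j => MILP.A G i j ≠ 0)).val.map
          (fun j => ((wl G l).2 j, MILP.A G i j))),
       fun j => ((wl G l).2 j,
        (Finset.univ.filter (fun i => MILP.A G i j ≠ 0)).val.map
          (fun i => ((wl G l).1 i, MILP.A G i j))))

/-- `G` is message-passing-tractable: whenever two constraints and two variables are
respectively indistinguishable by all rounds of the WL test, the corresponding matrix
entries agree (i.e. every submatrix of `A` over a pair of classes of the stable WL
partition is constant). -/
def MPTractable {m n : ℕ} (G : MILP m n) : Prop :=
  ∀ i i' j j', (∀ l, (wl G l).1 i = (wl G l).1 i') → (∀ l, (wl G l).2 j = (wl G l).2 j') →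
    MILP.A G i j = MILP.A G i' j'

/-- `G ∼^W G2`. -/
def WLEquivW {m n : ℕ} (G G2 : MILP m n) : Prop :=
  ∀ l, Finset.univ.val.map ((wl G l).1) = Finset.univ.val.map ((wl G2 l).1)
    ∧ ∀ j, (wl G l).2 j = (wl G2 l).2 j

/-! ### MP-GNNs -/

/-- A message-passing GNN of size `(m,n)`. -/
structure MPGNN (m n : ℕ) where
  L : ℕ
  d : ℕ → ℕ
  e : ℕ → ℕ
  p0 : ℝ × Sense → (Fin (d 0) → ℝ)
  q0 : ℝ × ExtLo × ExtHi × Bool → (Fin (d 0) → ℝ)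
  f : (l : ℕ) → (Fin (d l) → ℝ) × ℝ → (Fin (e l) → ℝ)
  g : (l : ℕ) → (Fin (d l) → ℝ) × ℝ → (Fin (e l) → ℝ)
  p : (l : ℕ) → (Fin (d l) → ℝ) × (Fin (e l) → ℝ) → (Fin (d (l + 1)) → ℝ)
  q : (l : ℕ) → (Fin (d l) → ℝ) × (Fin (e l) → ℝ) → (Fin (d (l + 1)) → ℝ)
  r : (Fin (d L) → ℝ) × (Fin (d L) → ℝ) × (Fin (d L) → ℝ) → ℝ
  p0_cont : Continuous p0
  q0_cont : Continuous q0
  f_cont : ∀ l, Continuous (f l)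
  g_cont : ∀ l, Continuous (g l)
  p_cont : ∀ l, Continuous (p l)
  q_cont : ∀ l, Continuous (q l)
  r_cont : Continuous r
  f_zero : ∀ l t, f l (t, 0) = 0
  g_zero : ∀ l s, g l (s, 0) = 0

namespace MPGNN

variable {m n : ℕ}

/-- The features of an MP-GNN on input `G` after `l` layers:
`(st N G l).1 i = s_i^l` and `(st N G l).2 j = t_j^l`. -/
def st (N : MPGNN m n) (G : MILP m n) :
    (l : ℕ) → (Fin m → (Fin (N.d l) → ℝ)) × (Fin n → (Fin (N.d l) → ℝ))
  | 0 =>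
      (fun i => N.p0 (MILP.b G i, MILP.sense G i),
       fun j => N.q0 (MILP.c G j, MILP.lo G j, MILP.hi G j, MILP.isInt G j))
  | l + 1 =>
      (fun i => N.p l ((st N G l).1 i, ∑ j, N.f l ((st N G l).2 j, MILP.A G i j)),
       fun j => N.q l ((st N G l).2 j, ∑ i, N.g l ((st N G l).1 i, MILP.A G i j)))

/-- The output `F(G) ∈ ℝⁿ` of an MP-GNN. -/
def eval (N : MPGNN m n) (G : MILP m n) : Fin n → ℝ := fun j =>
  N.r (∑ i, (st N G N.L).1 i, ∑ j', (st N G N.L).2 j', (st N G N.L).2 j)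

end MPGNN

/-! ### 2-FWL colors -/

/-- The pair (type of `(V,W)`-pair colors, type of `(W,W)`-pair colors) at each
round of the 2-FWL test. -/
def FWLTypes : ℕ → Type × Type
  | 0 => (VFeat × WFeat × ℝ, WFeat × WFeat × Bool)
  | l + 1 =>
      ((FWLTypes l).1 × Multiset ((FWLTypes l).2 × (FWLTypes l).1),
       (FWLTypes l).2 × Multiset ((FWLTypes l).1 × (FWLTypes l).1))

abbrev VWColor (l : ℕ) : Type := (FWLTypes l).1
abbrev WWColor (l : ℕ) : Type := (FWLTypes l).2

/-- The canonical 2-FWL colors of a MILP instance: `(fwl G l).1 i j = C_l^{VW}(i,j)` and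
`(fwl G l).2 j₁ j₂ = C_l^{WW}(j₁,j₂)`. -/
def fwl {m n : ℕ} (G : MILP m n) :
    (l : ℕ) → (Fin m → Fin n → VWColor l) × (Fin n → Fin n → WWColor l)
  | 0 =>
      (fun i j => ((MILP.b G i, MILP.sense G i),
        (MILP.c G j, MILP.lo G j, MILP.hi G j, MILP.isInt G j), MILP.A G i j),
       fun j1 j2 => ((MILP.c G j1, MILP.lo G j1, MILP.hi G j1, MILP.isInt G j1),
        (MILP.c G j2, MILP.lo G j2, MILP.hi G j2, MILP.isInt G j2), decide (j1 = j2)))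
  | l + 1 =>
      (fun i j => ((fwl G l).1 i j,
        Finset.univ.val.map (fun j1 => ((fwl G l).2 j1 j, (fwl G l).1 i j1))),
       fun j1 j2 => ((fwl G l).2 j1 j2,
        Finset.univ.val.map (fun i => ((fwl G l).1 i j2, (fwl G l).1 i j1))))

/-- `G ∼₂ G2`. -/
def FWLEquiv {m n : ℕ} (G G2 : MILP m n) : Prop :=
  ∀ l, (Finset.univ : Finset (Fin m × Fin n)).val.map (fun p => (fwl G l).1 p.1 p.2)
        = (Finset.univ : Finset (Fin m × Fin n)).val.map (fun p => (fwl G2 l).1 p.1 p.2)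
    ∧ (Finset.univ : Finset (Fin n × Fin n)).val.map (fun p => (fwl G l).2 p.1 p.2)
        = (Finset.univ : Finset (Fin n × Fin n)).val.map (fun p => (fwl G2 l).2 p.1 p.2)

/-- `G ∼₂^W G2`. -/
def FWLEquivW {m n : ℕ} (G G2 : MILP m n) : Prop :=
  ∀ l, ∀ j, Finset.univ.val.map (fun i => (fwl G l).1 i j)
        = Finset.univ.val.map (fun i => (fwl G2 l).1 i j)
    ∧ Finset.univ.val.map (fun j1 => (fwl G l).2 j1 j)
        = Finset.univ.val.map (fun j1 => (fwl G2 l).2 j1 j)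

/-! ### 2-FGNNs -/

/-- A second-order folklore GNN of size `(m,n)`. -/
structure FGNN2 (m n : ℕ) where
  L : ℕ
  d : ℕ → ℕ
  e : ℕ → ℕ
  p0 : VFeat × WFeat × ℝ → (Fin (d 0) → ℝ)
  q0 : WFeat × WFeat × Bool → (Fin (d 0) → ℝ)
  f : (l : ℕ) → (Fin (d l) → ℝ) × (Fin (d l) → ℝ) → (Fin (e l) → ℝ)
  g : (l : ℕ) → (Fin (d l) → ℝ) × (Fin (d l) → ℝ) → (Fin (e l) → ℝ)
  p : (l : ℕ) → (Fin (d l) → ℝ) × (Fin (e l) → ℝ) → (Fin (d (l + 1)) → ℝ)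
  q : (l : ℕ) → (Fin (d l) → ℝ) × (Fin (e l) → ℝ) → (Fin (d (l + 1)) → ℝ)
  r : (Fin (d L) → ℝ) × (Fin (d L) → ℝ) → ℝ
  p0_cont : Continuous p0
  q0_cont : Continuous q0
  f_cont : ∀ l, Continuous (f l)
  g_cont : ∀ l, Continuous (g l)
  p_cont : ∀ l, Continuous (p l)
  q_cont : ∀ l, Continuous (q l)
  r_cont : Continuous r

namespace FGNN2

variable {m n : ℕ}

/-- The features of a 2-FGNN on input `G` after `l` layers:
`(st N G l).1 i j = s_{ij}^l` and `(st N G l).2 j₁ j₂ = t_{j₁j₂}^l`. -/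
def st (N : FGNN2 m n) (G : MILP m n) :
    (l : ℕ) → (Fin m → Fin n → (Fin (N.d l) → ℝ)) × (Fin n → Fin n → (Fin (N.d l) → ℝ))
  | 0 =>
      (fun i j => N.p0 ((MILP.b G i, MILP.sense G i),
        (MILP.c G j, MILP.lo G j, MILP.hi G j, MILP.isInt G j), MILP.A G i j),
       fun j1 j2 => N.q0 ((MILP.c G j1, MILP.lo G j1, MILP.hi G j1, MILP.isInt G j1),
        (MILP.c G j2, MILP.lo G j2, MILP.hi G j2, MILP.isInt G j2), decide (j1 = j2)))
  | l + 1 =>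
      (fun i j => N.p l ((st N G l).1 i j, ∑ j1, N.f l ((st N G l).2 j1 j, (st N G l).1 i j1)),
       fun j1 j2 => N.q l ((st N G l).2 j1 j2, ∑ i, N.g l ((st N G l).1 i j2, (st N G l).1 i j1)))

/-- The output `F(G) ∈ ℝⁿ` of a 2-FGNN. -/
def eval (N : FGNN2 m n) (G : MILP m n) : Fin n → ℝ := fun j =>
  N.r (∑ i, (st N G N.L).1 i j, ∑ j1, (st N G N.L).2 j1 j)

end FGNN2



section AuxInterp

variable {X : Type*} {Y : Type*} {k : ℕ}

lemma interp_exists [MetricSpace X] (s : Finset X) (v : X → (Fin k → ℝ)) :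
    ∃ f : X → (Fin k → ℝ), Continuous f ∧ ∀ x ∈ s, f x = v x := by
  refine ⟨fun y => ∑ x ∈ s, (∏ x' ∈ s.erase x, dist y x' / dist x x') • v x, ?_, ?_⟩
  · apply continuous_finset_sum; intro x _
    exact ((continuous_finset_prod _ (fun x' _ =>
      (continuous_id.dist continuous_const).div_const _)).smul continuous_const)
  · intro x0 hx0
    dsimp only
    rw [Finset.sum_eq_single x0]
    · rw [Finset.prod_eq_one, one_smul]
      intro x' hx'
      exact div_self (dist_ne_zero.mpr (Ne.symm (Finset.mem_erase.mp hx').1))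
    · intro x hx hne
      rw [Finset.prod_eq_zero (Finset.mem_erase.mpr ⟨Ne.symm hne, hx0⟩), zero_smul]
      rw [dist_self, zero_div]
    · intro h; exact absurd hx0 h

lemma interp_exists' [TopologicalSpace X] [MetricSpace Y] (ι : X → Y)
    (hc : Continuous ι) (hinj : Function.Injective ι)
    (P : Finset (X × (Fin k → ℝ)))
    (hP : ∀ p ∈ P, ∀ q ∈ P, p.1 = q.1 → p.2 = q.2) :
    ∃ f : X → (Fin k → ℝ), Continuous f ∧ ∀ p ∈ P, f p.1 = p.2 := by
  have hv : ∀ y : Y, ∃ w : Fin k → ℝ, ∀ p ∈ P, ι p.1 = y → p.2 = w := by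
    intro y
    by_cases h : ∃ p ∈ P, ι p.1 = y
    · obtain ⟨p, hp, hpy⟩ := h
      exact ⟨p.2, fun q hq hqy => hP q hq p hp (hinj (by rw [hpy, hqy]))⟩
    · exact ⟨0, fun q hq hqy => absurd ⟨q, hq, hqy⟩ h⟩
  choose v hvspec using hv
  obtain ⟨f, hf, hfs⟩ := interp_exists (P.image (fun p => ι p.1)) v
  refine ⟨fun x => f (ι x), hf.comp hc, fun p hp => ?_⟩
  dsimp only
  rw [hfs _ (Finset.mem_image.mpr ⟨p, hp, rfl⟩)]
  exact (hvspec (ι p.1) p hp rfl).symm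

end AuxInterp

section AuxEnc

variable {α : Type*}

noncomputable def fenc (S : Finset α) (D : ℕ) (c : α) : Fin D → ℝ := fun kk =>
  if h : c ∈ S then (if (kk : ℕ) = ((S.equivFin ⟨c, h⟩ : Fin S.card) : ℕ) then 1 else 0) else 0

lemma fenc_apply_mem {S : Finset α} {D : ℕ} (hD : S.card ≤ D) {c a : α} (hc : c ∈ S) (ha : a ∈ S) :
    fenc S D a ⟨((S.equivFin ⟨c, hc⟩ : Fin S.card) : ℕ), lt_of_lt_of_le (Fin.isLt _) hD⟩
      = if a = c then 1 else 0 := by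
  unfold fenc
  rw [dif_pos ha]
  by_cases h : a = c
  · subst h
    simp
  · rw [if_neg h, if_neg]
    intro hh
    exact h (Subtype.ext_iff.mp (S.equivFin.injective (Fin.ext hh.symm)))

lemma fenc_inj {S : Finset α} {D : ℕ} (hD : S.card ≤ D) {c a : α} (hc : c ∈ S) (ha : a ∈ S)
    (h : fenc S D c = fenc S D a) : c = a := by
  have h1 := congrFun h ⟨((S.equivFin ⟨c, hc⟩ : Fin S.card) : ℕ), lt_of_lt_of_le (Fin.isLt _) hD⟩
  rw [fenc_apply_mem hD hc hc, fenc_apply_mem hD hc ha, if_pos rfl] at h1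
  by_cases hac : a = c
  · exact hac.symm
  · rw [if_neg hac] at h1; norm_num at h1

lemma multiset_sum_apply {β : Type*} {D : ℕ} (M : Multiset β) (f : β → Fin D → ℝ) (kk : Fin D) :
    (M.map f).sum kk = (M.map fun a => f a kk).sum := by
  induction M using Multiset.induction with
  | empty => simp
  | cons a s ih => simp [ih]

lemma multiset_boole_sum (M : Multiset α) (c : α) :
    (M.map (fun a => if a = c then (1:ℝ) else 0)).sum = (M.count c : ℝ) := by
  induction M using Multiset.induction with
  | empty => simp
  | cons a s ih =>
      by_cases h : a = c
      · subst h; simp [ih, add_comm]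
      · simp [h, ih, Multiset.count_cons_of_ne (Ne.symm h)]

lemma fenc_msum_coord {S : Finset α} {D : ℕ} (hD : S.card ≤ D) {c : α} (hc : c ∈ S)
    (M : Multiset α) (hM : ∀ a ∈ M, a ∈ S) :
    (M.map (fenc S D)).sum ⟨((S.equivFin ⟨c, hc⟩ : Fin S.card) : ℕ), lt_of_lt_of_le (Fin.isLt _) hD⟩
      = (M.count c : ℝ) := by
  rw [multiset_sum_apply, Multiset.map_congr rfl (fun a ha => fenc_apply_mem hD hc (hM a ha)),
    multiset_boole_sum]

lemma fenc_msum_inj {S : Finset α} {D : ℕ} (hD : S.card ≤ D) {M M' : Multiset α}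
    (hM : ∀ a ∈ M, a ∈ S) (hM' : ∀ a ∈ M', a ∈ S)
    (h : (M.map (fenc S D)).sum = (M'.map (fenc S D)).sum) : M = M' := by
  ext c
  by_cases hc : c ∈ S
  · have h1 := congrFun h ⟨((S.equivFin ⟨c, hc⟩ : Fin S.card) : ℕ), lt_of_lt_of_le (Fin.isLt _) hD⟩
    rw [fenc_msum_coord hD hc M hM, fenc_msum_coord hD hc M' hM'] at h1
    exact_mod_cast h1
  · rw [Multiset.count_eq_zero_of_notMem (fun hmem => hc (hM c hmem)),
      Multiset.count_eq_zero_of_notMem (fun hmem => hc (hM' c hmem))]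

lemma sum_map_congr {β : Type*} [AddCommMonoid β] {N : ℕ} {g g' : Fin N → α}
    (h : Finset.univ.val.map g = Finset.univ.val.map g') (f : α → β) :
    ∑ a, f (g a) = ∑ a, f (g' a) := by
  rw [Finset.sum_eq_multiset_sum, Finset.sum_eq_multiset_sum]
  have h2 : (Finset.univ.val.map g).map f = (Finset.univ.val.map g').map f := by rw [h]
  rw [Multiset.map_map, Multiset.map_map] at h2
  exact congrArg Multiset.sum h2

end AuxEnc
section AuxEmb

/-- Continuous injective embedding of extended bounds into `ℝ × ℝ`. -/
def embLoR : ExtLo → ℝ × ℝ := Sum.elim (fun a => (a, 0)) (fun _ => (0, 1))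

lemma embLoR_cont : Continuous embLoR :=
  Continuous.sumElim (by continuity) (by continuity)

lemma embLoR_inj : Function.Injective embLoR := by
  rintro (a | a) (b | b) h <;>
    simp only [embLoR, Sum.elim_inl, Sum.elim_inr, Prod.mk.injEq] at h
  · rw [h.1]
  · exact absurd h.2 one_ne_zero.symm
  · exact absurd h.2 one_ne_zero
  · rfl

def embBoolR : Bool → ℝ := fun b => if b then 1 else 0

lemma embBoolR_inj : Function.Injective embBoolR := by
  rintro (_|_) (_|_) h <;> simp [embBoolR] at h <;> rfl

def embWF : WFeat → ℝ × (ℝ × ℝ) × (ℝ × ℝ) × ℝ :=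
  fun w => (w.1, embLoR w.2.1, embLoR w.2.2.1, embBoolR w.2.2.2)

lemma embWF_cont : Continuous embWF := by
  unfold embWF
  refine continuous_fst.prodMk (.prodMk ?_ (.prodMk ?_ ?_))
  · exact embLoR_cont.comp (continuous_fst.comp continuous_snd)
  · exact embLoR_cont.comp (continuous_fst.comp (continuous_snd.comp continuous_snd))
  · exact Continuous.comp (by continuity : Continuous embBoolR)
      (continuous_snd.comp (continuous_snd.comp continuous_snd))

lemma embWF_inj : Function.Injective embWF := by
  rintro ⟨a1, a2, a3, a4⟩ ⟨b1, b2, b3, b4⟩ h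
  simp only [embWF, Prod.mk.injEq] at h
  exact Prod.ext h.1 (Prod.ext (embLoR_inj h.2.1) (Prod.ext (embLoR_inj h.2.2.1)
    (embBoolR_inj h.2.2.2)))

def embVF : VFeat → ℝ × ℝ := fun v => (v.1, (v.2 : ℕ))

lemma embVF_cont : Continuous embVF := by
  unfold embVF
  have h : Continuous (fun s : Sense => ((s : ℕ) : ℝ)) := by continuity
  exact continuous_fst.prodMk (h.comp continuous_snd)

lemma embVF_inj : Function.Injective embVF := by
  rintro ⟨a1, a2⟩ ⟨b1, b2⟩ h
  simp only [embVF, Prod.mk.injEq] at h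
  exact Prod.ext h.1 (Fin.ext (Nat.cast_injective h.2))

def embDV0 : VFeat × WFeat × ℝ → (ℝ × ℝ) × (ℝ × (ℝ × ℝ) × (ℝ × ℝ) × ℝ) × ℝ :=
  fun x => (embVF x.1, embWF x.2.1, x.2.2)

lemma embDV0_cont : Continuous embDV0 :=
  (embVF_cont.comp continuous_fst).prodMk
    ((embWF_cont.comp (continuous_fst.comp continuous_snd)).prodMk
      (continuous_snd.comp continuous_snd))

lemma embDV0_inj : Function.Injective embDV0 := by
  rintro ⟨a1, a2, a3⟩ ⟨b1, b2, b3⟩ h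
  simp only [embDV0, Prod.mk.injEq] at h
  exact Prod.ext (embVF_inj h.1) (Prod.ext (embWF_inj h.2.1) h.2.2)

def embDW0 : WFeat × WFeat × Bool → (ℝ × (ℝ × ℝ) × (ℝ × ℝ) × ℝ) × (ℝ × (ℝ × ℝ) × (ℝ × ℝ) × ℝ) × ℝ :=
  fun x => (embWF x.1, embWF x.2.1, embBoolR x.2.2)

lemma embDW0_cont : Continuous embDW0 :=
  (embWF_cont.comp continuous_fst).prodMk
    ((embWF_cont.comp (continuous_fst.comp continuous_snd)).prodMk
      (Continuous.comp (by continuity : Continuous embBoolR)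
        (continuous_snd.comp continuous_snd)))

lemma embDW0_inj : Function.Injective embDW0 := by
  rintro ⟨a1, a2, a3⟩ ⟨b1, b2, b3⟩ h
  simp only [embDW0, Prod.mk.injEq] at h
  exact Prod.ext (embWF_inj h.1) (Prod.ext (embWF_inj h.2.1) (embBoolR_inj h.2.2))

end AuxEmb
section AuxColors

variable {m n : ℕ}

def SVc (G H : MILP m n) (l : ℕ) : Finset (VWColor l) :=
  (Finset.univ.image fun p : Fin m × Fin n => (fwl G l).1 p.1 p.2) ∪
  (Finset.univ.image fun p : Fin m × Fin n => (fwl H l).1 p.1 p.2)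

def SWc (G H : MILP m n) (l : ℕ) : Finset (WWColor l) :=
  (Finset.univ.image fun p : Fin n × Fin n => (fwl G l).2 p.1 p.2) ∪
  (Finset.univ.image fun p : Fin n × Fin n => (fwl H l).2 p.1 p.2)

lemma mem_SVc_left (G H : MILP m n) (l : ℕ) (i : Fin m) (j : Fin n) :
    (fwl G l).1 i j ∈ SVc G H l :=
  Finset.mem_union_left _ (Finset.mem_image.mpr ⟨(i, j), Finset.mem_univ _, rfl⟩)

lemma mem_SVc_right (G H : MILP m n) (l : ℕ) (i : Fin m) (j : Fin n) :
    (fwl H l).1 i j ∈ SVc G H l :=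
  Finset.mem_union_right _ (Finset.mem_image.mpr ⟨(i, j), Finset.mem_univ _, rfl⟩)

lemma mem_SWc_left (G H : MILP m n) (l : ℕ) (j1 j2 : Fin n) :
    (fwl G l).2 j1 j2 ∈ SWc G H l :=
  Finset.mem_union_left _ (Finset.mem_image.mpr ⟨(j1, j2), Finset.mem_univ _, rfl⟩)

lemma mem_SWc_right (G H : MILP m n) (l : ℕ) (j1 j2 : Fin n) :
    (fwl H l).2 j1 j2 ∈ SWc G H l :=
  Finset.mem_union_right _ (Finset.mem_image.mpr ⟨(j1, j2), Finset.mem_univ _, rfl⟩)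

def ddim (G H : MILP m n) (l : ℕ) : ℕ := (SVc G H l).card + (SWc G H l).card

def edim (G H : MILP m n) (l : ℕ) : ℕ :=
  (SWc G H l ×ˢ SVc G H l).card + (SVc G H l ×ˢ SVc G H l).card

lemma card_SVc_le (G H : MILP m n) (l : ℕ) : (SVc G H l).card ≤ ddim G H l :=
  Nat.le_add_right _ _

lemma card_SWc_le (G H : MILP m n) (l : ℕ) : (SWc G H l).card ≤ ddim G H l :=
  Nat.le_add_left _ _

lemma card_WV_le (G H : MILP m n) (l : ℕ) : (SWc G H l ×ˢ SVc G H l).card ≤ edim G H l :=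
  Nat.le_add_right _ _

lemma card_VV_le (G H : MILP m n) (l : ℕ) : (SVc G H l ×ˢ SVc G H l).card ≤ edim G H l :=
  Nat.le_add_left _ _

noncomputable def cntV (G H : MILP m n) (l : ℕ) (M : Multiset (WWColor l × VWColor l)) :
    Fin (edim G H l) → ℝ :=
  (M.map (fenc (SWc G H l ×ˢ SVc G H l) (edim G H l))).sum

noncomputable def cntW (G H : MILP m n) (l : ℕ) (M : Multiset (VWColor l × VWColor l)) :
    Fin (edim G H l) → ℝ :=
  (M.map (fenc (SVc G H l ×ˢ SVc G H l) (edim G H l))).sum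

lemma fwl_succ_fst (K : MILP m n) (l : ℕ) (i : Fin m) (j : Fin n) :
    (fwl K (l+1)).1 i j = (((fwl K l).1 i j : VWColor l),
      Finset.univ.val.map (fun j1 => ((fwl K l).2 j1 j, (fwl K l).1 i j1))) := rfl

lemma fwl_succ_snd (K : MILP m n) (l : ℕ) (j1 j2 : Fin n) :
    (fwl K (l+1)).2 j1 j2 = (((fwl K l).2 j1 j2 : WWColor l),
      Finset.univ.val.map (fun i => ((fwl K l).1 i j2, (fwl K l).1 i j1))) := rfl

lemma SVc_succ_mem {G H : MILP m n} {l : ℕ} {c : VWColor (l+1)} (hc : c ∈ SVc G H (l+1)) :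
    c.1 ∈ SVc G H l ∧ ∀ p ∈ c.2, p.1 ∈ SWc G H l ∧ p.2 ∈ SVc G H l := by
  rw [SVc, Finset.mem_union, Finset.mem_image, Finset.mem_image] at hc
  rcases hc with ⟨p, _, rfl⟩ | ⟨p, _, rfl⟩
  · refine ⟨mem_SVc_left G H l p.1 p.2, ?_⟩
    intro q hq
    have hq' : q ∈ Finset.univ.val.map
        (fun j1 => ((fwl G l).2 j1 p.2, (fwl G l).1 p.1 j1)) := hq
    obtain ⟨j1, _, rfl⟩ := Multiset.mem_map.mp hq'
    exact ⟨mem_SWc_left G H l j1 p.2, mem_SVc_left G H l p.1 j1⟩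
  · refine ⟨mem_SVc_right G H l p.1 p.2, ?_⟩
    intro q hq
    have hq' : q ∈ Finset.univ.val.map
        (fun j1 => ((fwl H l).2 j1 p.2, (fwl H l).1 p.1 j1)) := hq
    obtain ⟨j1, _, rfl⟩ := Multiset.mem_map.mp hq'
    exact ⟨mem_SWc_right G H l j1 p.2, mem_SVc_right G H l p.1 j1⟩

lemma SWc_succ_mem {G H : MILP m n} {l : ℕ} {c : WWColor (l+1)} (hc : c ∈ SWc G H (l+1)) :
    c.1 ∈ SWc G H l ∧ ∀ p ∈ c.2, p.1 ∈ SVc G H l ∧ p.2 ∈ SVc G H l := by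
  rw [SWc, Finset.mem_union, Finset.mem_image, Finset.mem_image] at hc
  rcases hc with ⟨p, _, rfl⟩ | ⟨p, _, rfl⟩
  · refine ⟨mem_SWc_left G H l p.1 p.2, ?_⟩
    intro q hq
    have hq' : q ∈ Finset.univ.val.map
        (fun i => ((fwl G l).1 i p.2, (fwl G l).1 i p.1)) := hq
    obtain ⟨i, _, rfl⟩ := Multiset.mem_map.mp hq'
    exact ⟨mem_SVc_left G H l i p.2, mem_SVc_left G H l i p.1⟩
  · refine ⟨mem_SWc_right G H l p.1 p.2, ?_⟩
    intro q hq
    have hq' : q ∈ Finset.univ.val.map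
        (fun i => ((fwl H l).1 i p.2, (fwl H l).1 i p.1)) := hq
    obtain ⟨i, _, rfl⟩ := Multiset.mem_map.mp hq'
    exact ⟨mem_SVc_right G H l i p.2, mem_SVc_right G H l i p.1⟩

end AuxColors

section AuxPhi

variable {m n : ℕ}

noncomputable def phiN (N : FGNN2 m n) :
    (l : ℕ) → ((VWColor l → (Fin (N.d l) → ℝ)) × (WWColor l → (Fin (N.d l) → ℝ)))
  | 0 => (fun c => N.p0 c, fun c => N.q0 c)
  | l+1 =>
      (fun c => N.p l ((phiN N l).1 c.1,
        (c.2.map (fun p => N.f l ((phiN N l).2 p.1, (phiN N l).1 p.2))).sum),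
       fun c => N.q l ((phiN N l).2 c.1,
        (c.2.map (fun p => N.g l ((phiN N l).1 p.1, (phiN N l).1 p.2))).sum))

lemma st_eq_phiN (N : FGNN2 m n) (K : MILP m n) :
    ∀ l, (∀ i j, (FGNN2.st N K l).1 i j = (phiN N l).1 ((fwl K l).1 i j)) ∧
         (∀ j1 j2, (FGNN2.st N K l).2 j1 j2 = (phiN N l).2 ((fwl K l).2 j1 j2)) := by
  intro l
  induction l with
  | zero => exact ⟨fun i j => rfl, fun j1 j2 => rfl⟩
  | succ l ih =>
      constructor
      · intro i j
        show N.p l ((FGNN2.st N K l).1 i j,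
            ∑ j1, N.f l ((FGNN2.st N K l).2 j1 j, (FGNN2.st N K l).1 i j1))
          = N.p l ((phiN N l).1 ((fwl K l).1 i j),
            ((Finset.univ.val.map (fun j1 => ((fwl K l).2 j1 j, (fwl K l).1 i j1))).map
              (fun p => N.f l ((phiN N l).2 p.1, (phiN N l).1 p.2))).sum)
        have e2 : ((Finset.univ.val.map (fun j1 => ((fwl K l).2 j1 j, (fwl K l).1 i j1))).map
              (fun p => N.f l ((phiN N l).2 p.1, (phiN N l).1 p.2))).sum
            = ∑ j1, N.f l ((FGNN2.st N K l).2 j1 j, (FGNN2.st N K l).1 i j1) := by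
          rw [Multiset.map_map, ← Finset.sum_eq_multiset_sum]
          refine Finset.sum_congr rfl (fun j1 _ => ?_)
          simp only [Function.comp_apply]
          rw [ih.2 j1 j, ih.1 i j1]
        rw [e2, ih.1 i j]
      · intro j1 j2
        show N.q l ((FGNN2.st N K l).2 j1 j2,
            ∑ i, N.g l ((FGNN2.st N K l).1 i j2, (FGNN2.st N K l).1 i j1))
          = N.q l ((phiN N l).2 ((fwl K l).2 j1 j2),
            ((Finset.univ.val.map (fun i => ((fwl K l).1 i j2, (fwl K l).1 i j1))).map
              (fun p => N.g l ((phiN N l).1 p.1, (phiN N l).1 p.2))).sum)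
        have e2 : ((Finset.univ.val.map (fun i => ((fwl K l).1 i j2, (fwl K l).1 i j1))).map
              (fun p => N.g l ((phiN N l).1 p.1, (phiN N l).1 p.2))).sum
            = ∑ i, N.g l ((FGNN2.st N K l).1 i j2, (FGNN2.st N K l).1 i j1) := by
          rw [Multiset.map_map, ← Finset.sum_eq_multiset_sum]
          refine Finset.sum_congr rfl (fun i _ => ?_)
          simp only [Function.comp_apply]
          rw [ih.1 i j2, ih.1 i j1]
        rw [e2, ih.2 j1 j2]

lemma forward_agree {m n : ℕ} (G H : MILP m n) (h : FWLEquivW G H) (N : FGNN2 m n) :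
    FGNN2.eval N G = FGNN2.eval N H := by
  funext j
  unfold FGNN2.eval
  have hG := st_eq_phiN N G N.L
  have hH := st_eq_phiN N H N.L
  have h1 : ∑ i, (FGNN2.st N G N.L).1 i j = ∑ i, (FGNN2.st N H N.L).1 i j := by
    rw [Finset.sum_congr rfl (fun i _ => hG.1 i j), Finset.sum_congr rfl (fun i _ => hH.1 i j)]
    exact sum_map_congr ((h N.L j).1) _
  have h2 : ∑ j1, (FGNN2.st N G N.L).2 j1 j = ∑ j1, (FGNN2.st N H N.L).2 j1 j := by
    rw [Finset.sum_congr rfl (fun j1 _ => hG.2 j1 j), Finset.sum_congr rfl (fun j1 _ => hH.2 j1 j)]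
    exact sum_map_congr ((h N.L j).2) _
  rw [h1, h2]

end AuxPhi
section AuxBackward

variable {m n : ℕ}

lemma fenc_fin_sum_inj {α : Type*} {S : Finset α} {D : ℕ} (hD : S.card ≤ D) {N : ℕ}
    {g g' : Fin N → α} (hg : ∀ a, g a ∈ S) (hg' : ∀ a, g' a ∈ S)
    (h : ∑ a, fenc S D (g a) = ∑ a, fenc S D (g' a)) :
    Finset.univ.val.map g = Finset.univ.val.map g' := by
  apply fenc_msum_inj hD
    (fun a ha => by obtain ⟨x, _, rfl⟩ := Multiset.mem_map.mp ha; exact hg x)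
    (fun a ha => by obtain ⟨x, _, rfl⟩ := Multiset.mem_map.mp ha; exact hg' x)
  rw [Multiset.map_map, Multiset.map_map, ← Finset.sum_eq_multiset_sum,
    ← Finset.sum_eq_multiset_sum]
  exact h

lemma exists_distinguishing (G H : MILP m n) (hne : ¬ FWLEquivW G H) :
    ∃ F : FGNN2 m n, FGNN2.eval F G ≠ FGNN2.eval F H := by
  -- layer-0 feature maps
  obtain ⟨p0, hp0c, hp0⟩ := interp_exists' embDV0 embDV0_cont embDV0_inj
      ((SVc G H 0).image (fun c => (c, fenc (SVc G H 0) (ddim G H 0) c)))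
      (by
        intro p hp q hq hpq
        obtain ⟨c, _, rfl⟩ := Finset.mem_image.mp hp
        obtain ⟨c', _, rfl⟩ := Finset.mem_image.mp hq
        dsimp at hpq ⊢
        rw [hpq])
  have hp0' : ∀ c ∈ SVc G H 0, p0 c = fenc (SVc G H 0) (ddim G H 0) c :=
    fun c hc => hp0 _ (Finset.mem_image.mpr ⟨c, hc, rfl⟩)
  obtain ⟨q0, hq0c, hq0⟩ := interp_exists' embDW0 embDW0_cont embDW0_inj
      ((SWc G H 0).image (fun c => (c, fenc (SWc G H 0) (ddim G H 0) c)))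
      (by
        intro p hp q hq hpq
        obtain ⟨c, _, rfl⟩ := Finset.mem_image.mp hp
        obtain ⟨c', _, rfl⟩ := Finset.mem_image.mp hq
        dsimp at hpq ⊢
        rw [hpq])
  have hq0' : ∀ c ∈ SWc G H 0, q0 c = fenc (SWc G H 0) (ddim G H 0) c :=
    fun c hc => hq0 _ (Finset.mem_image.mpr ⟨c, hc, rfl⟩)
  -- message functions f, g
  have Hf : ∀ l, ∃ fl : (Fin (ddim G H l) → ℝ) × (Fin (ddim G H l) → ℝ) →
      (Fin (edim G H l) → ℝ), Continuous fl ∧ ∀ t ∈ SWc G H l, ∀ s ∈ SVc G H l,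
      fl (fenc (SWc G H l) (ddim G H l) t, fenc (SVc G H l) (ddim G H l) s)
        = fenc (SWc G H l ×ˢ SVc G H l) (edim G H l) (t, s) := by
    intro l
    obtain ⟨fl, hc, hs⟩ := interp_exists' id continuous_id Function.injective_id
        ((SWc G H l ×ˢ SVc G H l).image (fun ts =>
          ((fenc (SWc G H l) (ddim G H l) ts.1, fenc (SVc G H l) (ddim G H l) ts.2),
            fenc (SWc G H l ×ˢ SVc G H l) (edim G H l) ts)))
        (by
          intro p hp q hq hpq
          obtain ⟨ts, hts, rfl⟩ := Finset.mem_image.mp hp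
          obtain ⟨ts', hts', rfl⟩ := Finset.mem_image.mp hq
          obtain ⟨ht, hs1⟩ := Finset.mem_product.mp hts
          obtain ⟨ht', hs1'⟩ := Finset.mem_product.mp hts'
          dsimp at hpq ⊢
          rw [Prod.mk.injEq] at hpq
          rw [Prod.ext (fenc_inj (card_SWc_le G H l) ht ht' hpq.1)
            (fenc_inj (card_SVc_le G H l) hs1 hs1' hpq.2)])
    exact ⟨fl, hc, fun t ht s hs1 =>
      hs _ (Finset.mem_image.mpr ⟨(t, s), Finset.mem_product.mpr ⟨ht, hs1⟩, rfl⟩)⟩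
  have Hg : ∀ l, ∃ gl : (Fin (ddim G H l) → ℝ) × (Fin (ddim G H l) → ℝ) →
      (Fin (edim G H l) → ℝ), Continuous gl ∧ ∀ a ∈ SVc G H l, ∀ b ∈ SVc G H l,
      gl (fenc (SVc G H l) (ddim G H l) a, fenc (SVc G H l) (ddim G H l) b)
        = fenc (SVc G H l ×ˢ SVc G H l) (edim G H l) (a, b) := by
    intro l
    obtain ⟨gl, hc, hs⟩ := interp_exists' id continuous_id Function.injective_id
        ((SVc G H l ×ˢ SVc G H l).image (fun ts =>
          ((fenc (SVc G H l) (ddim G H l) ts.1, fenc (SVc G H l) (ddim G H l) ts.2),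
            fenc (SVc G H l ×ˢ SVc G H l) (edim G H l) ts)))
        (by
          intro p hp q hq hpq
          obtain ⟨ts, hts, rfl⟩ := Finset.mem_image.mp hp
          obtain ⟨ts', hts', rfl⟩ := Finset.mem_image.mp hq
          obtain ⟨ht, hs1⟩ := Finset.mem_product.mp hts
          obtain ⟨ht', hs1'⟩ := Finset.mem_product.mp hts'
          dsimp at hpq ⊢
          rw [Prod.mk.injEq] at hpq
          rw [Prod.ext (fenc_inj (card_SVc_le G H l) ht ht' hpq.1)
            (fenc_inj (card_SVc_le G H l) hs1 hs1' hpq.2)])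
    exact ⟨gl, hc, fun a ha b hb =>
      hs _ (Finset.mem_image.mpr ⟨(a, b), Finset.mem_product.mpr ⟨ha, hb⟩, rfl⟩)⟩
  -- update functions p, q
  have Hp : ∀ l, ∃ pl : (Fin (ddim G H l) → ℝ) × (Fin (edim G H l) → ℝ) →
      (Fin (ddim G H (l+1)) → ℝ), Continuous pl ∧ ∀ c ∈ SVc G H (l+1),
      pl (fenc (SVc G H l) (ddim G H l) c.1, cntV G H l c.2)
        = fenc (SVc G H (l+1)) (ddim G H (l+1)) c := by
    intro l
    obtain ⟨pl, hc, hs⟩ := interp_exists' id continuous_id Function.injective_id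
        ((SVc G H (l+1)).image (fun c =>
          ((fenc (SVc G H l) (ddim G H l) c.1, cntV G H l c.2),
            fenc (SVc G H (l+1)) (ddim G H (l+1)) c)))
        (by
          intro p hp q hq hpq
          obtain ⟨c, hcm, rfl⟩ := Finset.mem_image.mp hp
          obtain ⟨c', hcm', rfl⟩ := Finset.mem_image.mp hq
          obtain ⟨m1a, m1b⟩ := SVc_succ_mem hcm
          obtain ⟨m2a, m2b⟩ := SVc_succ_mem hcm'
          dsimp at hpq ⊢
          rw [Prod.mk.injEq] at hpq
          have e1 : c.1 = c'.1 := fenc_inj (card_SVc_le G H l) m1a m2a hpq.1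
          have e2 : c.2 = c'.2 := by
            refine fenc_msum_inj (card_WV_le G H l)
              (fun a ha => Finset.mem_product.mpr ⟨(m1b a ha).1, (m1b a ha).2⟩)
              (fun a ha => Finset.mem_product.mpr ⟨(m2b a ha).1, (m2b a ha).2⟩) ?_
            exact hpq.2
          rw [Prod.ext e1 e2])
    exact ⟨pl, hc, fun c hcm => hs _ (Finset.mem_image.mpr ⟨c, hcm, rfl⟩)⟩
  have Hq : ∀ l, ∃ ql : (Fin (ddim G H l) → ℝ) × (Fin (edim G H l) → ℝ) →
      (Fin (ddim G H (l+1)) → ℝ), Continuous ql ∧ ∀ c ∈ SWc G H (l+1),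
      ql (fenc (SWc G H l) (ddim G H l) c.1, cntW G H l c.2)
        = fenc (SWc G H (l+1)) (ddim G H (l+1)) c := by
    intro l
    obtain ⟨ql, hc, hs⟩ := interp_exists' id continuous_id Function.injective_id
        ((SWc G H (l+1)).image (fun c =>
          ((fenc (SWc G H l) (ddim G H l) c.1, cntW G H l c.2),
            fenc (SWc G H (l+1)) (ddim G H (l+1)) c)))
        (by
          intro p hp q hq hpq
          obtain ⟨c, hcm, rfl⟩ := Finset.mem_image.mp hp
          obtain ⟨c', hcm', rfl⟩ := Finset.mem_image.mp hq
          obtain ⟨m1a, m1b⟩ := SWc_succ_mem hcm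
          obtain ⟨m2a, m2b⟩ := SWc_succ_mem hcm'
          dsimp at hpq ⊢
          rw [Prod.mk.injEq] at hpq
          have e1 : c.1 = c'.1 := fenc_inj (card_SWc_le G H l) m1a m2a hpq.1
          have e2 : c.2 = c'.2 := by
            refine fenc_msum_inj (card_VV_le G H l)
              (fun a ha => Finset.mem_product.mpr ⟨(m1b a ha).1, (m1b a ha).2⟩)
              (fun a ha => Finset.mem_product.mpr ⟨(m2b a ha).1, (m2b a ha).2⟩) ?_
            exact hpq.2
          rw [Prod.ext e1 e2])
    exact ⟨ql, hc, fun c hcm => hs _ (Finset.mem_image.mpr ⟨c, hcm, rfl⟩)⟩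
  choose f hfc hfs using Hf
  choose g hgc hgs using Hg
  choose p hpc hps using Hp
  choose q hqc hqs using Hq
  -- where the WL test distinguishes
  unfold FWLEquivW at hne
  simp only [not_forall] at hne
  obtain ⟨l0, j0, hno⟩ := hne
  rw [not_and_or] at hno
  -- the readout target
  let zG : (Fin (ddim G H l0) → ℝ) × (Fin (ddim G H l0) → ℝ) :=
    (∑ i, fenc (SVc G H l0) (ddim G H l0) ((fwl G l0).1 i j0),
     ∑ j1, fenc (SWc G H l0) (ddim G H l0) ((fwl G l0).2 j1 j0))
  let F : FGNN2 m n :=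
    { L := l0, d := ddim G H, e := edim G H,
      p0 := p0, q0 := q0, f := f, g := g, p := p, q := q,
      r := fun x => dist x zG,
      p0_cont := hp0c, q0_cont := hq0c, f_cont := hfc, g_cont := hgc,
      p_cont := hpc, q_cont := hqc,
      r_cont := continuous_id.dist continuous_const }
  -- the features compute the color encodings
  have inv : ∀ (K : MILP m n), (∀ l i j, (fwl K l).1 i j ∈ SVc G H l) →
      (∀ l j1 j2, (fwl K l).2 j1 j2 ∈ SWc G H l) →
      ∀ l, (∀ i j, (FGNN2.st F K l).1 i j
              = fenc (SVc G H l) (ddim G H l) ((fwl K l).1 i j)) ∧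
           (∀ j1 j2, (FGNN2.st F K l).2 j1 j2
              = fenc (SWc G H l) (ddim G H l) ((fwl K l).2 j1 j2)) := by
    intro K hKV hKW l
    induction l with
    | zero =>
        exact ⟨fun i j => hp0' _ (hKV 0 i j), fun j1 j2 => hq0' _ (hKW 0 j1 j2)⟩
    | succ l ih =>
        constructor
        · intro i j
          show p l ((FGNN2.st F K l).1 i j,
              ∑ j1, f l ((FGNN2.st F K l).2 j1 j, (FGNN2.st F K l).1 i j1)) = _
          have e1 : ∑ j1, f l ((FGNN2.st F K l).2 j1 j, (FGNN2.st F K l).1 i j1)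
              = cntV G H l (Finset.univ.val.map
                  (fun j1 => ((fwl K l).2 j1 j, (fwl K l).1 i j1))) := by
            unfold cntV
            rw [Multiset.map_map, ← Finset.sum_eq_multiset_sum]
            refine Finset.sum_congr rfl (fun j1 _ => ?_)
            simp only [Function.comp_apply]
            rw [ih.2 j1 j, ih.1 i j1]
            exact hfs l _ (hKW l j1 j) _ (hKV l i j1)
          rw [ih.1 i j, e1]
          exact hps l _ (hKV (l+1) i j)
        · intro j1 j2
          show q l ((FGNN2.st F K l).2 j1 j2,
              ∑ i, g l ((FGNN2.st F K l).1 i j2, (FGNN2.st F K l).1 i j1)) = _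
          have e1 : ∑ i, g l ((FGNN2.st F K l).1 i j2, (FGNN2.st F K l).1 i j1)
              = cntW G H l (Finset.univ.val.map
                  (fun i => ((fwl K l).1 i j2, (fwl K l).1 i j1))) := by
            unfold cntW
            rw [Multiset.map_map, ← Finset.sum_eq_multiset_sum]
            refine Finset.sum_congr rfl (fun i _ => ?_)
            simp only [Function.comp_apply]
            rw [ih.1 i j2, ih.1 i j1]
            exact hgs l _ (hKV l i j2) _ (hKV l i j1)
          rw [ih.2 j1 j2, e1]
          exact hqs l _ (hKW (l+1) j1 j2)
  have invG := inv G (fun l i j => mem_SVc_left G H l i j) (fun l j1 j2 => mem_SWc_left G H l j1 j2)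
  have invH := inv H (fun l i j => mem_SVc_right G H l i j) (fun l j1 j2 => mem_SWc_right G H l j1 j2)
  refine ⟨F, fun heq => ?_⟩
  have hGj : FGNN2.eval F G j0 = 0 := by
    show dist ((∑ i, (FGNN2.st F G l0).1 i j0, ∑ j1, (FGNN2.st F G l0).2 j1 j0)) zG = 0
    rw [Finset.sum_congr rfl (fun i _ => (invG l0).1 i j0),
      Finset.sum_congr rfl (fun j1 _ => (invG l0).2 j1 j0)]
    exact dist_self _
  have hHj : FGNN2.eval F H j0 = dist
      ((∑ i, fenc (SVc G H l0) (ddim G H l0) ((fwl H l0).1 i j0),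
        ∑ j1, fenc (SWc G H l0) (ddim G H l0) ((fwl H l0).2 j1 j0))) zG := by
    show dist ((∑ i, (FGNN2.st F H l0).1 i j0, ∑ j1, (FGNN2.st F H l0).2 j1 j0)) zG = _
    rw [Finset.sum_congr rfl (fun i _ => (invH l0).1 i j0),
      Finset.sum_congr rfl (fun j1 _ => (invH l0).2 j1 j0)]
  have h0 := congrFun heq j0
  rw [hGj, hHj] at h0
  have hz := dist_eq_zero.mp h0.symm
  rw [Prod.mk.injEq] at hz
  rcases hno with hno | hno
  · exact hno (fenc_fin_sum_inj (card_SVc_le G H l0)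
      (fun i => mem_SVc_left G H l0 i j0) (fun i => mem_SVc_right G H l0 i j0) hz.1.symm)
  · exact hno (fenc_fin_sum_inj (card_SWc_le G H l0)
      (fun j1 => mem_SWc_left G H l0 j1 j0) (fun j1 => mem_SWc_right G H l0 j1 j0) hz.2.symm)

end AuxBackward
/-- Two MILP instances satisfy `G ∼₂^W Ḡ` if and only if every 2-FGNN
outputs the same vector on both. -/
theorem fwlEquivW_iff_all_FGNN2_agree
    {m n : ℕ} (G H : MILP m n) :
    FWLEquivW G H ↔ ∀ F : FGNN2 m n, FGNN2.eval F G = FGNN2.eval F H := by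
  constructor
  · intro h F
    exact forward_agree G H h F
  · intro h
    by_contra hne
    obtain ⟨F, hF⟩ := exists_distinguishing G H hne
    exact hF (h F)
end
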